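/- Let G be a non-abelian finite n-centralizer group of conjugate type (p, 1) for a prime p. Then |G/Z(G)| ≤ (n−2)², with equality if and only if G/Z(G) is isomorphic to C_p × C_p. -/

import Mathlib

/-- The set of element centralizers of a group `G`. -/
def centSet (G : Type*) [Group G] : Set (Subgroup G) :=
  Set.range fun x : G => Subgroup.centralizer {x}

open Subgroup

section core
set_option linter.unusedSectionVars false

variable {G : Type*} [Group G] [Finite G] {p : ℕ}

private lemma auxCardOfLe' {H K : Subgroup G} (h : H ≤ K) :
    Nat.card K = H.relIndex K * Nat.card H := by
  have h1 : Nat.card (H.subgroupOf K) * (H.subgroupOf K).index = Nat.card K :=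
    (H.subgroupOf K).card_mul_index
  have h2 : Nat.card (H.subgroupOf K) = Nat.card H :=
    Nat.card_congr (subgroupOfEquivOfLe h).toEquiv
  rw [h2] at h1
  rw [← h1, Subgroup.relIndex, mul_comm]

private lemma auxArith {p m N k : ℕ} (hp : 2 ≤ p) (hm : 2 ≤ m) (hk : k = m * p)
    (hcount : k + N ≤ N * min p m + 1) :
    2 ≤ N ∧ k ≤ (N - 1) ^ 2 ∧ (k = (N - 1) ^ 2 → m = p) := by
  set q := min p m with hqdef
  have hql : q * max p m = k := by
    rcases le_total p m with h | h
    · rw [hk, hqdef, min_eq_left h, max_eq_right h, mul_comm]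
    · rw [hk, hqdef, min_eq_right h, max_eq_left h]
  have hq2 : 2 ≤ q := le_min hp hm
  have hlq : q ≤ max p m := min_le_max
  obtain ⟨a, ha⟩ : ∃ a, q = a + 1 := ⟨q - 1, by omega⟩
  obtain ⟨b, hb⟩ : ∃ b, max p m = b + 1 := ⟨max p m - 1, by omega⟩
  have hab : a ≤ b := by omega
  obtain ⟨d, hd⟩ := le_iff_exists_add.mp hab
  subst hd
  have ha1 : 1 ≤ a := by omega
  have hkab : k = (a + 1) * (a + d + 1) := by rw [← hql, ha, hb]
  -- N ≥ 2
  have hN2 : 2 ≤ N := by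
    rcases Nat.lt_or_ge N 2 with hN | hN
    · exfalso
      have h1 : N * q ≤ q := by
        calc N * q ≤ 1 * q := Nat.mul_le_mul_right q (by omega)
        _ = q := one_mul q
      have h2 : 2 * q ≤ k := by
        rw [← hql]; exact Nat.mul_le_mul hq2 (by omega)
      omega
    · exact hN
  obtain ⟨E, hE⟩ : ∃ E, N = E + 2 := ⟨N - 2, by omega⟩
  -- the basic count : (a+1)*(a+d) ≤ (E+1)*a
  have hbase : (a + 1) * (a + d) ≤ (E + 1) * a := by
    have h0 := hcount
    rw [hkab, hE, ha] at h0
    nlinarith [h0]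
  -- key polynomial identity
  have hid : (a + 1) * ((a + d) * (a + d)) =
      (a + d + 1) * (a * a) + d * (a * a + a * d + 2 * a + d) := by ring
  have hkey : (a + d + 1) * (a * a) ≤ (a + 1) * ((a + d) * (a + d)) := by
    rw [hid]; exact Nat.le_add_right _ _
  have hsq : ((a + 1) * (a + d)) * ((a + 1) * (a + d)) ≤ ((E + 1) * a) * ((E + 1) * a) :=
    Nat.mul_le_mul hbase hbase
  have hmain : k ≤ (E + 1) * (E + 1) := by
    have h3 : k * (a * a) ≤ ((E + 1) * (E + 1)) * (a * a) := by
      calc k * (a * a) = (a + 1) * ((a + d + 1) * (a * a)) := by rw [hkab]; ring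
      _ ≤ (a + 1) * ((a + 1) * ((a + d) * (a + d))) := Nat.mul_le_mul_left _ hkey
      _ = ((a + 1) * (a + d)) * ((a + 1) * (a + d)) := by ring
      _ ≤ ((E + 1) * a) * ((E + 1) * a) := hsq
      _ = ((E + 1) * (E + 1)) * (a * a) := by ring
    exact Nat.le_of_mul_le_mul_right h3 (by positivity)
  refine ⟨hN2, ?_, ?_⟩
  · have hNE : N - 1 = E + 1 := by omega
    rw [hNE, pow_two]; exact hmain
  · intro heq
    have hNE : N - 1 = E + 1 := by omega
    rw [hNE, pow_two] at heq
    -- equality forces d = 0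
    have h5 : ((E + 1) * a) * ((E + 1) * a) ≤ ((a + 1) * (a + d)) * ((a + 1) * (a + d)) := by
      calc ((E + 1) * a) * ((E + 1) * a) = ((E + 1) * (E + 1)) * (a * a) := by ring
      _ = k * (a * a) := by rw [heq]
      _ = (a + 1) * ((a + d + 1) * (a * a)) := by rw [hkab]; ring
      _ ≤ (a + 1) * ((a + 1) * ((a + d) * (a + d))) := Nat.mul_le_mul_left _ hkey
      _ = ((a + 1) * (a + d)) * ((a + 1) * (a + d)) := by ring
    have h6 : ((a + 1) * (a + d)) * ((a + 1) * (a + d)) = ((E + 1) * (E + 1)) * (a * a) := by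
      have := le_antisymm hsq h5
      calc ((a + 1) * (a + d)) * ((a + 1) * (a + d))
          = ((E + 1) * a) * ((E + 1) * a) := this
      _ = ((E + 1) * (E + 1)) * (a * a) := by ring
    have h7 : (a + 1) * ((a + d + 1) * (a * a)) = (a + 1) * ((a + 1) * ((a + d) * (a + d))) := by
      calc (a + 1) * ((a + d + 1) * (a * a)) = k * (a * a) := by rw [hkab]; ring
      _ = ((E + 1) * (E + 1)) * (a * a) := by rw [heq]
      _ = ((a + 1) * (a + d)) * ((a + 1) * (a + d)) := h6.symm
      _ = (a + 1) * ((a + 1) * ((a + d) * (a + d))) := by ring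
    have h8 : (a + d + 1) * (a * a) = (a + 1) * ((a + d) * (a + d)) :=
      Nat.eq_of_mul_eq_mul_left (by omega) h7
    have h9 : (a + d + 1) * (a * a) + 0 = (a + d + 1) * (a * a) + d * (a * a + a * d + 2 * a + d) := by
      rw [Nat.add_zero]; exact h8.trans hid
    have hP : d * (a * a + a * d + 2 * a + d) = 0 := (Nat.add_left_cancel h9).symm
    have hd0 : d = 0 := by
      rcases Nat.mul_eq_zero.mp hP with h | h
      · exact h
      · exfalso
        simp only [Nat.add_eq_zero] at h
        omega
    -- d = 0 means min = max so p = m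
    have hmm : max p m ≤ min p m := by
      rw [hb, ← hqdef, ha]; omega
    have h9 : p ≤ m := le_trans (le_max_left p m) (le_trans hmm (min_le_right p m))
    have h10 : m ≤ p := le_trans (le_max_right p m) (le_trans hmm (min_le_left p m))
    omega


private lemma auxTop {x : G} : Subgroup.centralizer {x} = ⊤ ↔ x ∈ Subgroup.center G := by
  rw [Subgroup.centralizer_eq_top_iff_subset, Set.singleton_subset_iff]; rfl

variable (hp : p.Prime)
  (htype : ∀ x : G, x ∉ Subgroup.center G → (Subgroup.centralizer {x}).index = p)

include htype in
private lemma auxCardC {x : G} (hx : x ∉ Subgroup.center G) :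
    Nat.card (Subgroup.centralizer {x}) * p = Nat.card G := by
  rw [← htype x hx]; exact Subgroup.card_mul_index _

include hp htype in
private lemma auxEqOfLe {x y : G} (hx : x ∉ Subgroup.center G) (hy : y ∉ Subgroup.center G)
    (hle : Subgroup.centralizer {x} ≤ Subgroup.centralizer {y}) :
    Subgroup.centralizer {x} = Subgroup.centralizer {y} := by
  apply Subgroup.eq_of_le_of_card_ge hle
  have h1 := auxCardC htype hx
  have h2 := auxCardC htype hy
  exact le_of_eq (Nat.eq_of_mul_eq_mul_right hp.pos (h2.trans h1.symm))

private lemma auxMemA {x : G} : x ∈ Subgroup.centralizer ((Subgroup.centralizer {x} : Set G)) := by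
  rw [Subgroup.mem_centralizer_iff]
  intro h hh
  exact Subgroup.mem_centralizer_singleton_iff.mp hh

private lemma auxALeC {x : G} :
    Subgroup.centralizer ((Subgroup.centralizer {x} : Set G)) ≤ Subgroup.centralizer {x} := by
  intro a ha
  rw [Subgroup.mem_centralizer_iff] at ha
  exact Subgroup.mem_centralizer_singleton_iff.mpr
    (ha x (Subgroup.mem_centralizer_singleton_iff.mpr rfl)).symm

include hp htype in
private lemma auxFiber {x y : G} (hx : x ∉ Subgroup.center G) (hy : y ∉ Subgroup.center G) :
    Subgroup.centralizer {y} = Subgroup.centralizer {x} ↔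
      y ∈ Subgroup.centralizer ((Subgroup.centralizer {x} : Set G)) := by
  constructor
  · intro heq
    rw [Subgroup.mem_centralizer_iff]
    intro h hh
    rw [show ((Subgroup.centralizer {x} : Subgroup G) : Set G) =
      ((Subgroup.centralizer {y} : Subgroup G) : Set G) from by rw [heq]] at hh
    exact Subgroup.mem_centralizer_singleton_iff.mp hh
  · intro hyA
    rw [Subgroup.mem_centralizer_iff] at hyA
    refine (auxEqOfLe hp htype hx hy ?_).symm
    intro c hc
    exact Subgroup.mem_centralizer_singleton_iff.mpr (hyA c hc)

include hp htype in
private lemma auxCardALe {x : G} (hx : x ∉ Subgroup.center G) :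
    Nat.card (Subgroup.centralizer ((Subgroup.centralizer {x} : Set G))) ≤
      p * Nat.card (Subgroup.center G) := by
  set A := Subgroup.centralizer ((Subgroup.centralizer {x} : Set G)) with hA
  have hCne : Subgroup.centralizer {x} ≠ ⊤ := by
    intro h
    have := htype x hx
    rw [h, Subgroup.index_top] at this
    exact hp.one_lt.ne this
  obtain ⟨g, hg⟩ : ∃ g, g ∉ Subgroup.centralizer {x} := by
    by_contra h
    push_neg at h
    exact hCne ((Subgroup.eq_top_iff' _).mpr h)
  have hgZ : g ∉ Subgroup.center G := fun h => hg (Subgroup.center_le_centralizer _ h)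
  have hinf : A ⊓ Subgroup.centralizer {g} = Subgroup.center G := by
    apply le_antisymm
    · rintro a ⟨haA, haCg⟩
      by_contra haZ
      have hax : Subgroup.centralizer {a} = Subgroup.centralizer {x} :=
        (auxFiber hp htype hx haZ).mpr haA
      apply hg
      rw [← hax]
      exact Subgroup.mem_centralizer_singleton_iff.mpr
        (Subgroup.mem_centralizer_singleton_iff.mp haCg).symm
    · exact le_inf (Subgroup.center_le_centralizer _) (Subgroup.center_le_centralizer _)
  have h1 : (Subgroup.centralizer {g}).relIndex A ≤ (Subgroup.centralizer {g}).index := by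
    have h0 : (Subgroup.centralizer {g}).relIndex (⊤ : Subgroup G) ≠ 0 := by
      rw [Subgroup.relIndex_top_right]
      exact Subgroup.index_ne_zero_of_finite
    have := Subgroup.relIndex_le_of_le_right (le_top : A ≤ ⊤) h0
    rwa [Subgroup.relIndex_top_right] at this
  have h2 : (Subgroup.center G).relIndex A = (Subgroup.centralizer {g}).relIndex A := by
    rw [← hinf, inf_comm]
    exact Subgroup.inf_relIndex_right _ _
  have h3 : Nat.card A = (Subgroup.center G).relIndex A * Nat.card (Subgroup.center G) :=
    auxCardOfLe' (Subgroup.center_le_centralizer _)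
  rw [h3, h2]
  rw [htype g hgZ] at h1
  exact Nat.mul_le_mul_right _ h1

end core

section classify

private lemma auxCommGroup {K : Type*} [Group K] [Finite K] {p : ℕ} (hp : p.Prime)
    (W : Subgroup K) (hW : W ≤ Subgroup.center K) (hidx : W.index = p) :
    ∀ a b : K, a * b = b * a := by
  haveI : Fact p.Prime := ⟨hp⟩
  haveI : W.Normal := ⟨fun a ha g => by
    rw [Subgroup.mem_center_iff.mp (hW ha) g, mul_inv_cancel_right]; exact ha⟩
  haveI : IsCyclic (K ⧸ W) := isCyclic_of_prime_card (α := K ⧸ W) hidx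
  exact commutative_of_cyclic_center_quotient (QuotientGroup.mk' W)
    (by rw [QuotientGroup.ker_mk']; exact hW)

private lemma auxClassify {Q : Type*} [Group Q] [Finite Q] {p : ℕ} (hp : p.Prime)
    (hk : Nat.card Q = p ^ 2) (hnc : ¬IsCyclic Q) :
    Nonempty (Q ≃* Multiplicative (ZMod p) × Multiplicative (ZMod p)) := by
  haveI : Fact p.Prime := ⟨hp⟩
  have hcomm : ∀ a b : Q, a * b = b * a := IsPGroup.commutative_of_card_eq_prime_sq hk
  letI cg : CommGroup Q := { (inferInstance : Group Q) with mul_comm := hcomm }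
  haveI : Nontrivial Q := by
    rw [← Finite.one_lt_card_iff_nontrivial, hk]
    exact Nat.one_lt_pow (by norm_num) hp.one_lt
  -- every non-identity element has order p
  have horder : ∀ g : Q, g ≠ 1 → orderOf g = p := by
    intro g hg
    have hdvd : orderOf g ∣ p ^ 2 := hk ▸ orderOf_dvd_natCard g
    rcases (Nat.dvd_prime_pow hp).mp hdvd with ⟨i, hi, hoi⟩
    interval_cases i
    · exact absurd (orderOf_eq_one_iff.mp (by simpa using hoi)) hg
    · simpa using hoi
    · exact absurd (isCyclic_of_orderOf_eq_card g (by rw [hoi, hk])) hnc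
  obtain ⟨g, hg⟩ := exists_ne (1 : Q)
  set H := Subgroup.zpowers g with hH
  have hcardH : Nat.card H = p := by rw [hH, Nat.card_zpowers, horder g hg]
  obtain ⟨h, hh⟩ : ∃ h, h ∉ H := by
    by_contra hcon
    push_neg at hcon
    have : H = ⊤ := (Subgroup.eq_top_iff' _).mpr hcon
    rw [this] at hcardH
    have h2 : Nat.card (⊤ : Subgroup Q) = Nat.card Q := by
      rw [Subgroup.card_top]
    rw [h2, hk, pow_two] at hcardH
    nlinarith [hp.two_le]
  have hh1 : h ≠ 1 := fun he => hh (he ▸ one_mem H)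
  set K := Subgroup.zpowers h with hK
  have hcardK : Nat.card K = p := by rw [hK, Nat.card_zpowers, horder h hh1]
  have hdisj : H ⊓ K = ⊥ := by
    by_contra hne
    have hle : H ⊓ K ≤ K := inf_le_right
    have hdvd : Nat.card (H ⊓ K : Subgroup Q) ∣ p := by
      rw [← hcardK]
      exact Subgroup.card_dvd_of_le hle
    rcases (Nat.Prime.eq_one_or_self_of_dvd hp _ hdvd) with h1 | h1
    · exact hne (Subgroup.card_eq_one.mp h1)
    · have : H ⊓ K = K := Subgroup.eq_of_le_of_card_ge hle (le_of_eq (hcardK.trans h1.symm))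
      have hKH : K ≤ H := this ▸ inf_le_left
      exact hh (hKH (Subgroup.mem_zpowers h))
  -- the multiplication map is an isomorphism
  let φ : H × K →* Q := (H.subtype).coprod (K.subtype)
  have hinj : Function.Injective φ := by
    rw [injective_iff_map_eq_one]
    rintro ⟨a, b⟩ hab
    have hab' : (a : Q) * (b : Q) = 1 := hab
    have haH : (a : Q) ∈ H ⊓ K := by
      rw [Subgroup.mem_inf]
      refine ⟨a.2, ?_⟩
      have hai : (a : Q) = (b : Q)⁻¹ := by
        rw [eq_inv_iff_mul_eq_one]; exact hab'
      rw [hai]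
      exact inv_mem b.2
    rw [hdisj, Subgroup.mem_bot] at haH
    have hbK : (b : Q) = 1 := by
      rw [haH, one_mul] at hab'; exact hab'
    exact Prod.ext (Subtype.ext haH) (Subtype.ext hbK)
  have hbij : Function.Bijective φ := by
    rw [Nat.bijective_iff_injective_and_card]
    refine ⟨hinj, ?_⟩
    rw [Nat.card_prod, hcardH, hcardK, hk, pow_two]
  haveI hHc : IsCyclic H := isCyclic_of_prime_card hcardH
  haveI hKc : IsCyclic K := isCyclic_of_prime_card hcardK
  have eH : Multiplicative (ZMod p) ≃* H := hcardH ▸ zmodCyclicMulEquiv hHc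
  have eK : Multiplicative (ZMod p) ≃* K := hcardK ▸ zmodCyclicMulEquiv hKc
  exact ⟨((MulEquiv.ofBijective φ hbij).symm.trans
    (MulEquiv.prodCongr eH.symm eK.symm))⟩

end classify

/-- For a non-abelian finite `n`-centralizer group of conjugate type `(p, 1)` (`p` prime),
`|G/Z(G)| ≤ (n-2)²`, with equality iff `G/Z(G) ≅ C_p × C_p`. -/
theorem stmt10 (G : Type*) [Group G] [Finite G]
    (hG : ¬∀ a b : G, a * b = b * a) (n p : ℕ) (hp : p.Prime)
    (htype : ∀ x : G, x ∉ Subgroup.center G → (Subgroup.centralizer {x}).index = p)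
    (hcard : (centSet G).ncard = n) :
    Nat.card (G ⧸ Subgroup.center G) ≤ (n - 2) ^ 2 ∧
      (Nat.card (G ⧸ Subgroup.center G) = (n - 2) ^ 2 ↔
        Nonempty ((G ⧸ Subgroup.center G) ≃*
          (Multiplicative (ZMod p) × Multiplicative (ZMod p)))) := by
  classical
  haveI : Fintype G := Fintype.ofFinite G
  obtain ⟨x₀, hx₀⟩ : ∃ x, x ∉ Subgroup.center G := by
    by_contra h
    push_neg at h
    exact hG fun a b => (Subgroup.mem_center_iff.mp (h a) b).symm
  set zc := Nat.card (Subgroup.center G) with hzcdef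
  have hzc : 0 < zc := Nat.card_pos
  set k := (Subgroup.center G).index with hkdef
  have hgoalcard : Nat.card (G ⧸ Subgroup.center G) = k := rfl
  set m := (Subgroup.center G).relIndex (Subgroup.centralizer {x₀}) with hmdef
  have hkmp : k = m * p := by
    rw [hkdef, ← Subgroup.relIndex_mul_index
      (Subgroup.center_le_centralizer ({x₀} : Set G)), htype x₀ hx₀]
  have hcardCx0 : Nat.card (Subgroup.centralizer ({x₀} : Set G)) = m * zc :=
    auxCardOfLe' (Subgroup.center_le_centralizer _)
  have hcardC : ∀ x, x ∉ Subgroup.center G →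
      Nat.card (Subgroup.centralizer ({x} : Set G)) = m * zc := by
    intro x hx
    have h1 := auxCardC htype hx
    have h2 := auxCardC htype hx₀
    rw [hcardCx0] at h2
    exact Nat.eq_of_mul_eq_mul_right hp.pos (h1.trans h2.symm)
  have hm2 : 2 ≤ m := by
    by_contra hlt
    push_neg at hlt
    have hCpos : 0 < Nat.card (Subgroup.centralizer ({x₀} : Set G)) := Nat.card_pos
    have hm1 : m = 1 := by
      have hm01 : m = 0 ∨ m = 1 := by omega
      rcases hm01 with h0 | h1
      · rw [h0, zero_mul] at hcardCx0; omega
      · exact h1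
    have heqZC : Subgroup.center G = Subgroup.centralizer ({x₀} : Set G) :=
      Subgroup.eq_of_le_of_card_ge (Subgroup.center_le_centralizer _)
        (by rw [hcardCx0, hm1, one_mul])
    apply hx₀
    rw [heqZC]
    exact Subgroup.mem_centralizer_singleton_iff.mpr rfl
  set T : Finset G := Finset.univ.filter (fun y => ¬ y ∈ Subgroup.center G) with hTdef
  have hTmem : ∀ y : G, y ∈ T ↔ y ∉ Subgroup.center G := by
    intro y; rw [hTdef]; simp
  set f : G → Subgroup G := fun y => Subgroup.centralizer {y} with hfdef
  set Nn := (T.image f).card with hNndef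
  have hcardFin : ∀ (H : Subgroup G), ((H : Set G).toFinset).card = Nat.card H := by
    intro H
    rw [Set.toFinset_card, Nat.card_eq_fintype_card]
    exact Fintype.card_congr (Equiv.refl _)
  have hfib : ∀ x ∈ T, (T.filter (fun y => f y = f x)).card + zc =
      Nat.card (Subgroup.centralizer ((Subgroup.centralizer ({x} : Set G) : Subgroup G) : Set G)) := by
    intro x hxT
    have hx : x ∉ Subgroup.center G := (hTmem x).mp hxT
    have hsub : ((Subgroup.center G : Subgroup G) : Set G).toFinset ⊆
        ((Subgroup.centralizer ((Subgroup.centralizer ({x} : Set G) : Subgroup G) : Set G) : Subgroup G) : Set G).toFinset := by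
      intro y hy
      rw [Set.mem_toFinset] at hy ⊢
      exact Subgroup.center_le_centralizer _ hy
    have hfe : T.filter (fun y => f y = f x) =
        ((Subgroup.centralizer ((Subgroup.centralizer ({x} : Set G) : Subgroup G) : Set G) : Subgroup G) : Set G).toFinset \
        ((Subgroup.center G : Subgroup G) : Set G).toFinset := by
      ext y
      rw [Finset.mem_filter, Finset.mem_sdiff, Set.mem_toFinset, Set.mem_toFinset]
      simp only [hfdef]
      constructor
      · rintro ⟨hyT, hyf⟩
        have hy : y ∉ Subgroup.center G := (hTmem y).mp hyT
        exact ⟨(auxFiber hp htype hx hy).mp hyf, hy⟩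
      · rintro ⟨hyA, hyZ⟩
        exact ⟨(hTmem y).mpr hyZ, (auxFiber hp htype hx hyZ).mpr hyA⟩
    rw [hfe, Finset.card_sdiff_of_subset hsub, hcardFin, hcardFin]
    have hle : zc ≤ Nat.card (Subgroup.centralizer ((Subgroup.centralizer ({x} : Set G) : Subgroup G) : Set G)) := by
      rw [hzcdef]
      exact Subgroup.card_le_of_le (Subgroup.center_le_centralizer _)
    omega
  have hTcard : T.card + zc = k * zc := by
    have h1 := Finset.card_filter_add_card_filter_not
      (s := (Finset.univ : Finset G)) (p := fun y => y ∈ Subgroup.center G)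
    rw [Finset.card_univ] at h1
    have h2 : (Finset.univ.filter (fun y => y ∈ Subgroup.center G)).card = zc := by
      rw [hzcdef, Nat.card_eq_fintype_card, Fintype.card_subtype]
    have h3 : zc * k = Fintype.card G := by
      rw [← Nat.card_eq_fintype_card, hzcdef, hkdef]
      exact Subgroup.card_mul_index _
    have h4 : zc * k = k * zc := mul_comm _ _
    have h5 : T.card = (Finset.univ.filter (fun y => ¬ y ∈ Subgroup.center G)).card := by
      rw [hTdef]
    linarith [h1, h2, h3, h4, h5]
  have hAle : ∀ x ∈ T,
      Nat.card (Subgroup.centralizer ((Subgroup.centralizer ({x} : Set G) : Subgroup G) : Set G)) ≤ min p m * zc := by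
    intro x hxT
    have hx := (hTmem x).mp hxT
    rcases le_total p m with hpm | hmp
    · rw [min_eq_left hpm]
      exact auxCardALe hp htype hx
    · rw [min_eq_right hmp]
      calc Nat.card (Subgroup.centralizer ((Subgroup.centralizer ({x} : Set G) : Subgroup G) : Set G))
          ≤ Nat.card (Subgroup.centralizer ({x} : Set G)) := Subgroup.card_le_of_le auxALeC
      _ = m * zc := hcardC x hx
  have hcount : k + Nn ≤ Nn * min p m + 1 := by
    have hsum : T.card = ∑ S ∈ T.image f, (T.filter (fun y => f y = S)).card :=
      Finset.card_eq_sum_card_image f T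
    have hsum2 : T.card + Nn * zc = ∑ S ∈ T.image f, ((T.filter (fun y => f y = S)).card + zc) := by
      rw [Finset.sum_add_distrib, Finset.sum_const, smul_eq_mul, ← hsum, ← hNndef]
    have hterm : ∀ S ∈ T.image f, (T.filter (fun y => f y = S)).card + zc ≤ min p m * zc := by
      intro S hS
      obtain ⟨x, hxT, hfx⟩ := Finset.mem_image.mp hS
      rw [← hfx, hfib x hxT]
      exact hAle x hxT
    have hbd : ∑ S ∈ T.image f, ((T.filter (fun y => f y = S)).card + zc) ≤ Nn * (min p m * zc) := by
      calc ∑ S ∈ T.image f, ((T.filter (fun y => f y = S)).card + zc)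
          ≤ (T.image f).card • (min p m * zc) := Finset.sum_le_card_nsmul _ _ _ hterm
      _ = Nn * (min p m * zc) := by rw [smul_eq_mul, ← hNndef]
    have hfinal : (k + Nn) * zc ≤ (Nn * min p m + 1) * zc := by
      have e1 : (k + Nn) * zc = k * zc + Nn * zc := by ring
      have e2 : (Nn * min p m + 1) * zc = Nn * (min p m * zc) + zc := by ring
      rw [e1, e2]
      linarith [hTcard, hsum2, hbd]
    exact Nat.le_of_mul_le_mul_right hfinal hzc
  obtain ⟨hN2, hmain, hforce⟩ := auxArith hp.two_le hm2 hkmp hcount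
  have hn : Nn + 1 = n := by
    have hset : centSet G = insert ⊤ (↑(T.image f) : Set (Subgroup G)) := by
      ext S
      simp only [centSet, Set.mem_range, Set.mem_insert_iff, Finset.mem_coe,
        Finset.mem_image, hfdef]
      constructor
      · rintro ⟨x, rfl⟩
        by_cases hx : x ∈ Subgroup.center G
        · left; exact auxTop.mpr hx
        · right; exact ⟨x, (hTmem x).mpr hx, rfl⟩
      · rintro (rfl | ⟨x, hxT, rfl⟩)
        · exact ⟨1, auxTop.mpr (Subgroup.one_mem _)⟩
        · exact ⟨x, rfl⟩
    have htop : (⊤ : Subgroup G) ∉ (T.image f) := by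
      intro hmem
      obtain ⟨x, hxT, hfx⟩ := Finset.mem_image.mp hmem
      exact ((hTmem x).mp hxT) (auxTop.mp hfx)
    rw [hset, Set.ncard_insert_of_notMem (by simpa using htop) (Finset.finite_toSet _),
      Set.ncard_coe_finset] at hcard
    omega
  refine ⟨?_, ?_, ?_⟩
  · rw [hgoalcard]
    have he : n - 2 = Nn - 1 := by omega
    rw [he]
    exact hmain
  · intro heq
    rw [hgoalcard] at heq
    have he : n - 2 = Nn - 1 := by omega
    rw [he] at heq
    have hmp := hforce heq
    have hk2 : Nat.card (G ⧸ Subgroup.center G) = p ^ 2 := by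
      rw [hgoalcard, hkmp, hmp, pow_two]
    have hnc : ¬IsCyclic (G ⧸ Subgroup.center G) := by
      intro hcyc
      exact hG (commutative_of_cyclic_center_quotient (QuotientGroup.mk' _)
        (le_of_eq (QuotientGroup.ker_mk' _)))
    exact auxClassify hp hk2 hnc
  · rintro ⟨e⟩
    have hp2 := hp.two_le
    have hk2 : k = p * p := by
      have h1 : Nat.card (G ⧸ Subgroup.center G) =
          Nat.card (Multiplicative (ZMod p) × Multiplicative (ZMod p)) :=
        Nat.card_congr e.toEquiv
      rw [hgoalcard] at h1
      have h2 : Nat.card (Multiplicative (ZMod p)) = p := by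
        rw [Nat.card_congr (Multiplicative.toAdd (α := ZMod p)), Nat.card_zmod]
      rw [h1, Nat.card_prod, h2]
    have hmp : m = p := by
      have h0 := hkmp
      rw [hk2] at h0
      exact Nat.eq_of_mul_eq_mul_right hp.pos h0.symm
    have hAeq : ∀ x ∈ T,
        Nat.card (Subgroup.centralizer ((Subgroup.centralizer ({x} : Set G) : Subgroup G) : Set G)) = p * zc := by
      intro x hxT
      have hx := (hTmem x).mp hxT
      refine le_antisymm (auxCardALe hp htype hx) ?_
      have hidx : ((Subgroup.center G).subgroupOf (Subgroup.centralizer ({x} : Set G))).index = p := by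
        have h1 : Nat.card (Subgroup.centralizer ({x} : Set G)) =
            (Subgroup.center G).relIndex (Subgroup.centralizer ({x} : Set G)) * zc :=
          auxCardOfLe' (Subgroup.center_le_centralizer _)
        rw [hcardC x hx, hmp] at h1
        exact (Nat.eq_of_mul_eq_mul_right hzc h1).symm
      have hcomm := auxCommGroup hp
        ((Subgroup.center G).subgroupOf (Subgroup.centralizer ({x} : Set G)))
        (by
          intro a ha
          rw [Subgroup.mem_subgroupOf] at ha
          exact Subgroup.mem_center_iff.mpr fun g =>
            Subtype.ext (Subgroup.mem_center_iff.mp ha g))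
        hidx
      have hCle : Subgroup.centralizer ({x} : Set G) ≤
          Subgroup.centralizer ((Subgroup.centralizer ({x} : Set G) : Subgroup G) : Set G) := by
        intro y hy
        rw [Subgroup.mem_centralizer_iff]
        intro h hh
        exact congrArg Subtype.val (hcomm ⟨h, hh⟩ ⟨y, hy⟩)
      have h5 := Subgroup.card_le_of_le hCle
      rw [hcardC x hx, hmp] at h5
      exact h5
    have hcount2 : k + Nn = Nn * p + 1 := by
      have hsum : T.card = ∑ S ∈ T.image f, (T.filter (fun y => f y = S)).card :=
        Finset.card_eq_sum_card_image f T
      have hsum2 : T.card + Nn * zc = ∑ S ∈ T.image f, ((T.filter (fun y => f y = S)).card + zc) := by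
        rw [Finset.sum_add_distrib, Finset.sum_const, smul_eq_mul, ← hsum, ← hNndef]
      have hterm : ∀ S ∈ T.image f, ((T.filter (fun y => f y = S)).card + zc) = p * zc := by
        intro S hS
        obtain ⟨x, hxT, hfx⟩ := Finset.mem_image.mp hS
        rw [← hfx, hfib x hxT]
        exact hAeq x hxT
      have hbd : ∑ S ∈ T.image f, ((T.filter (fun y => f y = S)).card + zc) = Nn * (p * zc) := by
        rw [Finset.sum_congr rfl hterm, Finset.sum_const, smul_eq_mul, ← hNndef]
      have hfinal : (k + Nn) * zc = (Nn * p + 1) * zc := by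
        have e1 : (k + Nn) * zc = k * zc + Nn * zc := by ring
        have e2 : (Nn * p + 1) * zc = Nn * (p * zc) + zc := by ring
        rw [e1, e2]
        linarith [hTcard, hsum2, hbd]
      exact Nat.eq_of_mul_eq_mul_right hzc hfinal
    obtain ⟨s, hs⟩ : ∃ s, p = s + 2 := ⟨p - 2, by omega⟩
    rw [hs] at hcount2 hk2
    have h4 : Nn * (s + 1) + (k + Nn) = (s + 3) * (s + 1) + (Nn * (s + 2) + 1) := by
      rw [hk2]; ring
    have hNnval : Nn * (s + 1) = (s + 3) * (s + 1) := by linarith [h4, hcount2]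
    have hNn : Nn = s + 3 := Nat.eq_of_mul_eq_mul_right (by omega) hNnval
    rw [hgoalcard, hk2]
    have he : n - 2 = s + 2 := by omega
    rw [he, pow_two]
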